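/- For every n ≥ 2, the Parikh vectors (2^{n-1} + 1, 2^{n-1} − 1), (2^{n-1}, 2^{n-1}), and (2^{n-1} − 1, 2^{n-1} + 1) all occur as Parikh vectors of length-2^n factors of the paperfolding word. -/

import Mathlib

/-- letter of the ordinary paperfolding word at position `m` (positions start at 1):
writing `m = k * 2^j` with `k` odd, the letter is `0` if `k ≡ 1 (mod 4)` and `1` otherwise. -/
def pf (m : ℕ) : ℕ := if (m / 2 ^ (padicValNat 2 m)) % 4 = 1 then 0 else 1

/-- the length-`n` factor of `w` starting at position `i`. -/
def factorAt (w : ℕ → ℕ) (i n : ℕ) : List ℕ := (List.range n).map (fun j => w (i + j))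

/-- `u` is a factor of the 1-indexed infinite word `w`. -/
def IsFactor (w : ℕ → ℕ) (u : List ℕ) : Prop := ∃ i ≥ 1, u = factorAt w i u.length

lemma pf_le_one (m : ℕ) : pf m ≤ 1 := by unfold pf; split <;> omega

lemma pf_two_mul (m : ℕ) (hm : m ≠ 0) : pf (2 * m) = pf m := by
  unfold pf
  have h2 : padicValNat 2 (2 * m) = 1 + padicValNat 2 m := by
    rw [padicValNat.mul (by norm_num) hm, padicValNat.self (by norm_num)]
  rw [h2, pow_add, pow_one, Nat.mul_div_mul_left _ _ (by norm_num)]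

lemma pf_odd (m : ℕ) (hm : ¬ 2 ∣ m) : pf m = if m % 4 = 1 then 0 else 1 := by
  unfold pf
  rw [padicValNat.eq_zero_of_not_dvd hm]
  simp

lemma pf_odd1 (k : ℕ) : pf (4 * k + 1) = 0 := by
  rw [pf_odd _ (by omega)]
  have : (4 * k + 1) % 4 = 1 := by omega
  simp [this]

lemma pf_odd3 (k : ℕ) : pf (4 * k + 3) = 1 := by
  rw [pf_odd _ (by omega)]
  have : (4 * k + 3) % 4 = 3 := by omega
  simp [this]

def S : ℕ → ℕ
  | 0 => 0
  | (n + 1) => S n + pf (n + 1)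

lemma S_succ (m : ℕ) : S (m + 1) = S m + pf (m + 1) := rfl

lemma S_add (a L : ℕ) : S (a + L) = S a + (factorAt pf (a + 1) L).sum := by
  induction L with
  | zero => simp [factorAt]
  | succ L ih =>
    have e : factorAt pf (a + 1) (L + 1) = factorAt pf (a + 1) L ++ [pf (a + 1 + L)] := by
      simp [factorAt, List.range_succ]
    rw [show a + (L + 1) = (a + L) + 1 from rfl, S_succ, ih, e, List.sum_append,
        show a + L + 1 = a + 1 + L from by ring]
    simp only [List.sum_cons, List.sum_nil]
    omega

lemma S_four (K : ℕ) : S (4 * K) = S (2 * K) + K := by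
  induction K with
  | zero => simp
  | succ K ih =>
    rw [show 4 * (K + 1) = (((4 * K + 1) + 1) + 1) + 1 from by ring,
        S_succ, S_succ, S_succ, S_succ,
        show 2 * (K + 1) = ((2 * K) + 1) + 1 from by ring, S_succ, S_succ]
    rw [show 4 * K + 1 + 1 + 1 + 1 = 2 * (2 * K + 2) from by ring, pf_two_mul _ (by omega)]
    rw [show 4 * K + 1 + 1 + 1 = 4 * K + 3 from by ring, pf_odd3]
    rw [show 4 * K + 1 + 1 = 2 * (2 * K + 1) from by ring, pf_two_mul _ (by omega)]
    rw [pf_odd1, show 2 * K + 1 + 1 = 2 * K + 2 from rfl]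
    omega

lemma S_scale (c j : ℕ) : S (c * 2 ^ (j + 1)) + c = S (c * 2) + c * 2 ^ j := by
  induction j with
  | zero => simp
  | succ j ih =>
    have h4 : S (4 * (c * 2 ^ j)) = S (2 * (c * 2 ^ j)) + c * 2 ^ j := S_four _
    have e1 : c * 2 ^ (j + 1 + 1) = 4 * (c * 2 ^ j) := by ring
    have e2 : c * 2 ^ (j + 1) = 2 * (c * 2 ^ j) := by ring
    rw [e1, h4, ← e2]
    have : c * 2 ^ (j + 1) = 2 * (c * 2 ^ j) := e2
    omega

-- base values
lemma pf1 : pf 1 = 0 := pf_odd1 0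
lemma pf2 : pf 2 = 0 := by rw [show (2:ℕ) = 2 * 1 from rfl, pf_two_mul _ one_ne_zero, pf1]
lemma pf3 : pf 3 = 1 := pf_odd3 0
lemma pf4 : pf 4 = 0 := by rw [show (4:ℕ) = 2 * 2 from rfl, pf_two_mul _ (by norm_num), pf2]
lemma pf5 : pf 5 = 0 := pf_odd1 1
lemma pf6 : pf 6 = 1 := by rw [show (6:ℕ) = 2 * 3 from rfl, pf_two_mul _ (by norm_num), pf3]
lemma pf7 : pf 7 = 1 := pf_odd3 1
lemma pf8 : pf 8 = 0 := by rw [show (8:ℕ) = 2 * 4 from rfl, pf_two_mul _ (by norm_num), pf4]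
lemma pf9 : pf 9 = 0 := pf_odd1 2
lemma pf10 : pf 10 = 0 := by rw [show (10:ℕ) = 2 * 5 from rfl, pf_two_mul _ (by norm_num), pf5]
lemma pf11 : pf 11 = 1 := pf_odd3 2
lemma pf12 : pf 12 = 1 := by rw [show (12:ℕ) = 2 * 6 from rfl, pf_two_mul _ (by norm_num), pf6]
lemma pf13 : pf 13 = 0 := pf_odd1 3
lemma pf14 : pf 14 = 1 := by rw [show (14:ℕ) = 2 * 7 from rfl, pf_two_mul _ (by norm_num), pf7]

lemma S2 : S 2 = 0 := by
  show S 0 + pf 1 + pf 2 = 0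
  rw [pf1, pf2]
  rfl
lemma S6 : S 6 = 2 := by
  show S 2 + pf 3 + pf 4 + pf 5 + pf 6 = 2
  rw [S2, pf3, pf4, pf5, pf6]
lemma S10 : S 10 = 3 := by
  show S 6 + pf 7 + pf 8 + pf 9 + pf 10 = 3
  rw [S6, pf7, pf8, pf9, pf10]
lemma S14 : S 14 = 6 := by
  show S 10 + pf 11 + pf 12 + pf 13 + pf 14 = 6
  rw [S10, pf11, pf12, pf13, pf14]

lemma count_binary (u : List ℕ) (h : ∀ x ∈ u, x ≤ 1) :
    u.count 1 = u.sum ∧ u.count 0 + u.sum = u.length := by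
  induction u with
  | nil => simp
  | cons a t ih =>
    have ha : a ≤ 1 := h a List.mem_cons_self
    obtain ⟨h1, h2⟩ := ih (fun x hx => h x (List.mem_cons_of_mem _ hx))
    interval_cases a <;> simp [List.count_cons, h1] <;> omega

lemma factorAt_binary (i L : ℕ) : ∀ x ∈ factorAt pf i L, x ≤ 1 := by
  intro x hx
  simp only [factorAt, List.mem_map] at hx
  obtain ⟨j, _, rfl⟩ := hx
  exact pf_le_one _

lemma factorAt_length (w : ℕ → ℕ) (i L : ℕ) : (factorAt w i L).length = L := by
  simp [factorAt]


lemma key_factor (a L : ℕ) : ∃ u : List ℕ, IsFactor pf u ∧ u.length = L ∧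
    u.count 1 + S a = S (a + L) ∧ u.count 0 + u.count 1 = L := by
  obtain ⟨c1, c0⟩ := count_binary _ (factorAt_binary (a + 1) L)
  refine ⟨factorAt pf (a + 1) L, ⟨a + 1, by omega, by rw [factorAt_length]⟩,
    factorAt_length _ _ _, ?_, ?_⟩
  · rw [c1, S_add a L]
    omega
  · rw [c1]
    rw [factorAt_length] at c0
    omega

/-- For `n ≥ 2`, the Parikh vectors `(2^(n-1)+1, 2^(n-1)-1)`, `(2^(n-1), 2^(n-1))` and
`(2^(n-1)-1, 2^(n-1)+1)` all occur among factors of length `2^n` of the paperfolding word. -/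
theorem paperfolding_occurring_parikh_vectors (n : ℕ) (hn : 2 ≤ n) :
    (∃ u : List ℕ, IsFactor pf u ∧ u.length = 2 ^ n ∧
      (u.count 0, u.count 1) = (2 ^ (n - 1) + 1, 2 ^ (n - 1) - 1)) ∧
    (∃ u : List ℕ, IsFactor pf u ∧ u.length = 2 ^ n ∧
      (u.count 0, u.count 1) = (2 ^ (n - 1), 2 ^ (n - 1))) ∧
    (∃ u : List ℕ, IsFactor pf u ∧ u.length = 2 ^ n ∧
      (u.count 0, u.count 1) = (2 ^ (n - 1) - 1, 2 ^ (n - 1) + 1)) := by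
  obtain ⟨m, rfl⟩ : ∃ m, n = m + 2 := ⟨n - 2, by omega⟩
  have hQ1 : 1 ≤ 2 ^ m := Nat.one_le_two_pow
  have h1 : (2:ℕ) ^ (m + 1) = 2 * 2 ^ m := by ring
  have h2 : (2:ℕ) ^ (m + 2) = 4 * 2 ^ m := by ring
  have h3 : (2:ℕ) ^ (m + 3) = 8 * 2 ^ m := by ring
  have hsub : m + 2 - 1 = m + 1 := rfl
  have hs1 : S (2 ^ (m + 2)) + 1 = 2 ^ (m + 1) := by
    have h := S_scale 1 (m + 1)
    rw [show m + 1 + 1 = m + 2 from rfl, one_mul, show (1:ℕ) * 2 = 2 from rfl, S2, one_mul] at h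
    omega
  have hs2 : S (2 ^ (m + 3)) + 1 = 2 ^ (m + 2) := by
    have h := S_scale 1 (m + 2)
    rw [show m + 2 + 1 = m + 3 from rfl, one_mul, show (1:ℕ) * 2 = 2 from rfl, S2, one_mul] at h
    omega
  have hs5 : S (5 * 2 ^ (m + 1)) + 5 = 3 + 5 * 2 ^ m := by
    have h := S_scale 5 m
    rw [show (5:ℕ) * 2 = 10 from rfl, S10] at h
    omega
  have hs7 : S (7 * 2 ^ (m + 1)) + 7 = 6 + 7 * 2 ^ m := by
    have h := S_scale 7 m
    rw [show (7:ℕ) * 2 = 14 from rfl, S14] at h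
    omega
  refine ⟨?_, ?_, ?_⟩
  · obtain ⟨u, hf, hl, hc, hcc⟩ := key_factor 0 (2 ^ (m + 2))
    rw [Nat.zero_add] at hc
    have hS0 : S 0 = 0 := rfl
    refine ⟨u, hf, hl, ?_⟩
    rw [hsub, Prod.mk.injEq, h1]
    rw [h1] at hs1
    rw [h2] at hcc
    constructor <;> omega
  · obtain ⟨u, hf, hl, hc, hcc⟩ := key_factor (2 ^ (m + 2)) (2 ^ (m + 2))
    have he : (2:ℕ) ^ (m + 2) + 2 ^ (m + 2) = 2 ^ (m + 3) := by ring
    rw [he] at hc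
    refine ⟨u, hf, hl, ?_⟩
    rw [hsub, Prod.mk.injEq, h1]
    rw [h2] at hcc hs2
    constructor <;> omega
  · obtain ⟨u, hf, hl, hc, hcc⟩ := key_factor (5 * 2 ^ (m + 1)) (2 ^ (m + 2))
    have he : 5 * (2:ℕ) ^ (m + 1) + 2 ^ (m + 2) = 7 * 2 ^ (m + 1) := by ring
    rw [he] at hc
    refine ⟨u, hf, hl, ?_⟩
    rw [hsub, Prod.mk.injEq, h1]
    rw [h2] at hcc
    constructor <;> omega
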